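/- Let Φ = (φ_1, …, φ_M) be a frame for ℝ^N (its vectors span ℝ^N), and suppose c' ∈ ℝ^M with c'_i ≥ 0 attains the infimum of ‖I_N − S(c)‖₂ over all c ∈ ℝ^M with c_i ≥ 0. Then the matrix S(c') is invertible (equivalently, positive definite). -/

import Mathlib

/-- The ℓ²→ℓ² operator norm (largest singular value) of a square real matrix. -/
noncomputable def opNorm {N : ℕ} (A : Matrix (Fin N) (Fin N) ℝ) : ℝ :=
  ‖(Matrix.toEuclideanCLM (𝕜 := ℝ) A : EuclideanSpace ℝ (Fin N) →L[ℝ] EuclideanSpace ℝ (Fin N))‖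

/-- `frameOp φ c = ∑ i, c i • φ i φ iᵀ`. -/
noncomputable def frameOp {N M : ℕ} (φ : Fin M → (Fin N → ℝ)) (c : Fin M → ℝ) :
    Matrix (Fin N) (Fin N) ℝ :=
  ∑ i, c i • Matrix.vecMulVec (φ i) (φ i)

section aux
open Matrix

variable {N M : ℕ}

lemma aux_vecMulVec_mulVec (u v x : Fin N → ℝ) :
    (Matrix.vecMulVec u v).mulVec x = (v ⬝ᵥ x) • u := by
  ext j
  simp only [Matrix.mulVec, Matrix.vecMulVec_apply, dotProduct, Pi.smul_apply,
    smul_eq_mul, Finset.sum_mul, Finset.mul_sum]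
  exact Finset.sum_congr rfl fun k _ => by ring

lemma aux_sum_mulVec {K : ℕ} (f : Fin K → Matrix (Fin N) (Fin N) ℝ) (x : Fin N → ℝ) :
    (∑ i, f i) *ᵥ x = ∑ i, f i *ᵥ x := by
  ext j
  simp only [Matrix.mulVec, dotProduct, Matrix.sum_apply, Finset.sum_apply, Finset.sum_mul]
  rw [Finset.sum_comm]

lemma aux_dot_sum {K : ℕ} (x : Fin N → ℝ) (f : Fin K → Fin N → ℝ) :
    x ⬝ᵥ (∑ i, f i) = ∑ i, x ⬝ᵥ f i := by
  simp only [dotProduct, Finset.sum_apply, Finset.mul_sum]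
  exact Finset.sum_comm

lemma aux_frameOp_mulVec (φ : Fin M → (Fin N → ℝ)) (c : Fin M → ℝ) (x : Fin N → ℝ) :
    (frameOp φ c).mulVec x = ∑ i, (c i * (φ i ⬝ᵥ x)) • φ i := by
  unfold frameOp
  rw [aux_sum_mulVec]
  congr 1; ext i
  rw [Matrix.smul_mulVec, aux_vecMulVec_mulVec, smul_smul]

lemma aux_quad (φ : Fin M → (Fin N → ℝ)) (c : Fin M → ℝ) (x : Fin N → ℝ) :
    x ⬝ᵥ (frameOp φ c).mulVec x = ∑ i, c i * (φ i ⬝ᵥ x) ^ 2 := by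
  rw [aux_frameOp_mulVec, aux_dot_sum]
  congr 1; ext i
  rw [dotProduct_smul, dotProduct_comm, smul_eq_mul, sq]
  ring

lemma aux_quad_pos (φ : Fin M → (Fin N → ℝ))
    (hspan : Submodule.span ℝ (Set.range φ) = ⊤)
    (x : Fin N → ℝ) (hx : x ≠ 0) :
    0 < x ⬝ᵥ (frameOp φ (fun _ => 1)).mulVec x := by
  rw [aux_quad]
  simp only [one_mul]
  have hnn : ∀ i ∈ Finset.univ, (0:ℝ) ≤ (φ i ⬝ᵥ x) ^ 2 := fun i _ => sq_nonneg _
  by_contra h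
  push_neg at h
  have hzero : ∑ i, (φ i ⬝ᵥ x) ^ 2 = 0 :=
    le_antisymm h (Finset.sum_nonneg hnn)
  have hall : ∀ i, φ i ⬝ᵥ x = 0 := by
    intro i
    have := (Finset.sum_eq_zero_iff_of_nonneg hnn).mp hzero i (Finset.mem_univ i)
    exact pow_eq_zero_iff (two_ne_zero) |>.mp this
  -- every vector in the span pairs to zero with x
  have hker : ∀ y : Fin N → ℝ, y ⬝ᵥ x = 0 := by
    intro y
    have hy : y ∈ Submodule.span ℝ (Set.range φ) := by rw [hspan]; trivial
    induction hy using Submodule.span_induction with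
    | mem z hz => obtain ⟨i, rfl⟩ := hz; exact hall i
    | zero => simp
    | add a b _ _ ha hb => rw [add_dotProduct, ha, hb, add_zero]
    | smul r a _ ha => rw [smul_dotProduct, ha, smul_zero]
  exact hx (dotProduct_self_eq_zero.mp (hker x))

lemma aux_inner_eq (x y : Fin N → ℝ) :
    (inner ℝ ((WithLp.equiv 2 _).symm x) ((WithLp.equiv 2 _).symm y) : ℝ) = x ⬝ᵥ y := by
  simp [PiLp.inner_apply, dotProduct, WithLp.equiv_symm_apply, RCLike.inner_apply,
    mul_comm]

lemma aux_clm_apply (A : Matrix (Fin N) (Fin N) ℝ) (x : Fin N → ℝ) :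
    Matrix.toEuclideanCLM (𝕜 := ℝ) A ((WithLp.equiv 2 _).symm x) =
      (WithLp.equiv 2 _).symm (A.mulVec x) := by
  rw [WithLp.equiv_symm_apply, Matrix.toEuclideanCLM_toLp]

lemma aux_dot_le (A : Matrix (Fin N) (Fin N) ℝ) (x : Fin N → ℝ) :
    x ⬝ᵥ A.mulVec x ≤ opNorm A * (x ⬝ᵥ x) := by
  set X := (WithLp.equiv 2 (Fin N → ℝ)).symm x with hX
  have h1 : x ⬝ᵥ A.mulVec x = inner ℝ X (Matrix.toEuclideanCLM (𝕜 := ℝ) A X) := by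
    rw [aux_clm_apply, aux_inner_eq]
  have h2 : (x ⬝ᵥ x) = ‖X‖ * ‖X‖ := by
    rw [← real_inner_self_eq_norm_mul_norm, aux_inner_eq]
  rw [h1, h2]
  calc inner ℝ X (Matrix.toEuclideanCLM (𝕜 := ℝ) A X)
      ≤ ‖X‖ * ‖Matrix.toEuclideanCLM (𝕜 := ℝ) A X‖ := real_inner_le_norm _ _
    _ ≤ ‖X‖ * (opNorm A * ‖X‖) := by
        gcongr
        exact (Matrix.toEuclideanCLM (𝕜 := ℝ) A).le_opNorm X
    _ = opNorm A * (‖X‖ * ‖X‖) := by ring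

lemma aux_inner_clm (A : Matrix (Fin N) (Fin N) ℝ) (x : Fin N → ℝ) :
    (inner ℝ ((WithLp.equiv 2 _).symm x)
      (Matrix.toEuclideanCLM (𝕜 := ℝ) A ((WithLp.equiv 2 _).symm x)) : ℝ) = x ⬝ᵥ (A *ᵥ x) := by
  rw [aux_clm_apply, aux_inner_eq]

lemma aux_norm_clm_sq (A : Matrix (Fin N) (Fin N) ℝ) (x : Fin N → ℝ) :
    ‖Matrix.toEuclideanCLM (𝕜 := ℝ) A ((WithLp.equiv 2 _).symm x)‖ ^ 2 =
      (A *ᵥ x) ⬝ᵥ (A *ᵥ x) := by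
  rw [aux_clm_apply, ← real_inner_self_eq_norm_sq, aux_inner_eq]

lemma aux_norm_symm_sq (x : Fin N → ℝ) :
    ‖(WithLp.equiv 2 (Fin N → ℝ)).symm x‖ ^ 2 = x ⬝ᵥ x := by
  rw [← real_inner_self_eq_norm_sq, aux_inner_eq]

end aux

open Matrix in
/-- if `Φ` spans `ℝ^N` and `c' ≥ 0` attains the infimum of `‖I - S(c)‖₂`
over `c ≥ 0`, then `S(c')` is invertible (equivalently, positive definite). -/
theorem stmt_8 (N M : ℕ) (φ : Fin M → (Fin N → ℝ))
    (hspan : Submodule.span ℝ (Set.range φ) = ⊤)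
    (c' : Fin M → ℝ) (hc' : ∀ i, 0 ≤ c' i)
    (hopt : ∀ d : Fin M → ℝ, (∀ i, 0 ≤ d i) →
      opNorm (1 - frameOp φ c') ≤ opNorm (1 - frameOp φ d)) :
    IsUnit (frameOp φ c') ∧ (frameOp φ c').PosDef := by
  classical
  have key : ∃ t : ℝ, 0 ≤ t ∧ opNorm (1 - frameOp φ (fun _ => t)) < 1 := by
    by_cases hN : N = 0
    · subst hN
      refine ⟨0, le_refl _, ?_⟩
      haveI : Subsingleton (EuclideanSpace ℝ (Fin 0)) :=
        ⟨fun a b => by ext i; exact Fin.elim0 i⟩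
      have hz : (Matrix.toEuclideanCLM (𝕜 := ℝ) (1 - frameOp φ (fun _ => (0:ℝ)))) = 0 :=
        ContinuousLinearMap.ext fun x => Subsingleton.elim _ _
      unfold opNorm
      rw [hz, norm_zero]
      norm_num
    · haveI : Nonempty (Fin N) := ⟨⟨0, Nat.pos_of_ne_zero hN⟩⟩
      set S₁ := frameOp φ (fun _ => (1:ℝ)) with hS₁
      have hsphere_compact : IsCompact (Metric.sphere (0 : EuclideanSpace ℝ (Fin N)) 1) :=
        isCompact_sphere _ _
      have hsphere_ne : (Metric.sphere (0 : EuclideanSpace ℝ (Fin N)) 1).Nonempty :=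
        NormedSpace.sphere_nonempty.mpr zero_le_one
      have hq_cont : Continuous
          (fun X : EuclideanSpace ℝ (Fin N) =>
            (inner ℝ X (Matrix.toEuclideanCLM (𝕜 := ℝ) S₁ X) : ℝ)) :=
        continuous_id.inner (Matrix.toEuclideanCLM (𝕜 := ℝ) S₁).continuous
      obtain ⟨X₀, hX₀mem, hX₀min⟩ :=
        hsphere_compact.exists_isMinOn hsphere_ne hq_cont.continuousOn
      set m : ℝ := inner ℝ X₀ (Matrix.toEuclideanCLM (𝕜 := ℝ) S₁ X₀) with hm
      have hmin : ∀ x : Fin N → ℝ, ‖(WithLp.equiv 2 (Fin N → ℝ)).symm x‖ = 1 →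
          m ≤ x ⬝ᵥ (S₁ *ᵥ x) := by
        intro x hx
        rw [← aux_inner_clm]
        exact isMinOn_iff.mp hX₀min _ (by simpa using hx)
      have hm_pos : 0 < m := by
        obtain ⟨x₀, hX₀⟩ : ∃ x₀, X₀ = (WithLp.equiv 2 (Fin N → ℝ)).symm x₀ :=
          ⟨WithLp.equiv 2 _ X₀, ((WithLp.equiv 2 (Fin N → ℝ)).symm_apply_apply X₀).symm⟩
        have hX₀norm : ‖X₀‖ = 1 := by simpa using hX₀mem
        have hx₀ne : x₀ ≠ 0 := by
          intro h0
          rw [h0] at hX₀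
          rw [hX₀] at hX₀norm
          simp at hX₀norm
        have hq := aux_quad_pos φ hspan _ hx₀ne
        rw [hm, hX₀, aux_inner_clm]
        exact hq
      set B : ℝ := opNorm S₁ with hB
      have hB0 : 0 ≤ B := norm_nonneg _
      set t : ℝ := m / (B ^ 2 + 1) with ht
      have hBpos : 0 < B ^ 2 + 1 := by positivity
      have ht0 : 0 < t := div_pos hm_pos hBpos
      have htB : t * B ^ 2 ≤ m := by
        rw [ht, div_mul_eq_mul_div, div_le_iff₀ hBpos]
        nlinarith [hm_pos]
      have hδpos : 0 < 2 * t * m - t ^ 2 * B ^ 2 := by nlinarith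
      set K : ℝ := 1 - (2 * t * m - t ^ 2 * B ^ 2) with hK
      have hKlt : K < 1 := by rw [hK]; linarith
      have hsmul : frameOp φ (fun _ => t) = t • S₁ := by
        rw [hS₁]
        simp [frameOp, Finset.smul_sum, smul_smul]
      set A : Matrix (Fin N) (Fin N) ℝ := 1 - frameOp φ (fun _ => t) with hA
      have hunit : ∀ X : EuclideanSpace ℝ (Fin N), ‖X‖ = 1 →
          ‖Matrix.toEuclideanCLM (𝕜 := ℝ) A X‖ ^ 2 ≤ K := by
        intro X hX
        obtain ⟨x, hXx⟩ : ∃ x, X = (WithLp.equiv 2 (Fin N → ℝ)).symm x :=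
          ⟨WithLp.equiv 2 _ X, ((WithLp.equiv 2 (Fin N → ℝ)).symm_apply_apply X).symm⟩
        rw [hXx] at hX ⊢
        have hxx : x ⬝ᵥ x = 1 := by
          rw [← aux_norm_symm_sq, hX]; norm_num
        have hqm : m ≤ x ⬝ᵥ (S₁ *ᵥ x) := hmin x hX
        have hSx : (S₁ *ᵥ x) ⬝ᵥ (S₁ *ᵥ x) ≤ B ^ 2 := by
          rw [← aux_norm_clm_sq]
          have h2 : ‖Matrix.toEuclideanCLM (𝕜 := ℝ) S₁ ((WithLp.equiv 2 (Fin N → ℝ)).symm x)‖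
              ≤ B := by
            have h4 := (Matrix.toEuclideanCLM (𝕜 := ℝ) S₁).le_opNorm
              ((WithLp.equiv 2 (Fin N → ℝ)).symm x)
            rw [hX, mul_one] at h4
            exact h4
          have h3 : (0:ℝ) ≤ ‖Matrix.toEuclideanCLM (𝕜 := ℝ) S₁
              ((WithLp.equiv 2 (Fin N → ℝ)).symm x)‖ := norm_nonneg _
          nlinarith
        rw [aux_norm_clm_sq]
        have hexp : A *ᵥ x = x - t • (S₁ *ᵥ x) := by
          rw [hA, Matrix.sub_mulVec, Matrix.one_mulVec, hsmul, Matrix.smul_mulVec]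
        rw [hexp]
        have hdot : (x - t • (S₁ *ᵥ x)) ⬝ᵥ (x - t • (S₁ *ᵥ x)) =
            x ⬝ᵥ x - 2 * t * (x ⬝ᵥ (S₁ *ᵥ x)) + t ^ 2 * ((S₁ *ᵥ x) ⬝ᵥ (S₁ *ᵥ x)) := by
          simp only [sub_dotProduct, dotProduct_sub, smul_dotProduct,
            dotProduct_smul, smul_eq_mul]
          rw [dotProduct_comm (S₁ *ᵥ x) x]
          ring
        rw [hdot, hxx, hK]
        nlinarith
      refine ⟨t, le_of_lt ht0, ?_⟩
      have hK0 : 0 ≤ K := by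
        obtain ⟨X, hX⟩ := hsphere_ne
        have hXn : ‖X‖ = 1 := by simpa using hX
        exact le_trans (sq_nonneg _) (hunit X hXn)
      have hle : opNorm A ≤ Real.sqrt K := by
        unfold opNorm
        apply ContinuousLinearMap.opNorm_le_of_unit_norm (Real.sqrt_nonneg K)
        intro X hX
        have h2 := hunit X hX
        have h3 := Real.sqrt_le_sqrt h2
        rwa [Real.sqrt_sq (norm_nonneg _)] at h3
      have hlt : Real.sqrt K < 1 := by
        have h5 := Real.sqrt_lt_sqrt hK0 hKlt
        simpa using h5
      calc opNorm A ≤ Real.sqrt K := hle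
        _ < 1 := hlt
  obtain ⟨t, ht0, htlt⟩ := key
  have h1 : opNorm (1 - frameOp φ c') < 1 :=
    lt_of_le_of_lt (hopt _ (fun _ => ht0)) htlt
  have hpos : ∀ x : Fin N → ℝ, x ≠ 0 → 0 < x ⬝ᵥ ((frameOp φ c') *ᵥ x) := by
    intro x hx
    have hxx : 0 < x ⬝ᵥ x := by
      rcases lt_or_eq_of_le (Finset.sum_nonneg fun i _ => mul_self_nonneg (x i) : (0:ℝ) ≤ x ⬝ᵥ x) with h | h
      · exact h
      · exact absurd (dotProduct_self_eq_zero.mp h.symm) hx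
    have hle := aux_dot_le (1 - frameOp φ c') x
    have hsub : x ⬝ᵥ ((1 - frameOp φ c') *ᵥ x) = x ⬝ᵥ x - x ⬝ᵥ ((frameOp φ c') *ᵥ x) := by
      rw [Matrix.sub_mulVec, Matrix.one_mulVec, dotProduct_sub]
    nlinarith [mul_lt_mul_of_pos_right h1 hxx]
  have hherm : (frameOp φ c').IsHermitian := by
    unfold Matrix.IsHermitian
    ext i j
    simp [frameOp, Matrix.conjTranspose_apply, Matrix.sum_apply, Matrix.vecMulVec_apply,
      mul_comm, mul_left_comm]
  have hpd : (frameOp φ c').PosDef := by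
    refine Matrix.PosDef.of_dotProduct_mulVec_pos hherm fun x hx => ?_
    have : star x = x := by funext i; simp
    rw [this]
    exact hpos x hx
  refine ⟨?_, hpd⟩
  rw [Matrix.isUnit_iff_isUnit_det]
  exact isUnit_iff_ne_zero.mpr hpd.det_pos.ne'
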